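/- Fix 0 < p < 1/2 and integers n, k with k = pn. For f : binom([n], k) → [0,1], define g : powerset([n]) → [0,1] by g(x) = (binom(|x|,k))^{-1} · Σ_{x' ⊆ x, |x'|=k} f(x') if |x| ≥ k and g(x) = 0 otherwise. Define Edge(f) = Σ_{x,y ∈ binom([n],k), x ∩ y = ∅} f(x)f(y) / (binom(n,k)·binom(n-k,k)) and Edge(g) = Σ_{x,y ⊆ [n], x ∩ y = ∅} g(x)g(y)·μ_{p,p}(x,y), where μ_{p,p}(x,y) = p^{|x|}·p^{|y|}·(1-2p)^{n-|x|-|y|}. Then Edge(g) ≤ Edge(f). -/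

import Mathlib

open Finset

/-- The "up" extrapolation of `f` (defined on `k`-subsets) to all subsets:
`g(x) = binom(|x|,k)⁻¹ ∑_{x' ⊆ x, |x'| = k} f(x')` for `|x| ≥ k`, else `0`. -/
noncomputable def upFn {n : ℕ} (k : ℕ) (f : Finset (Fin n) → ℝ)
    (x : Finset (Fin n)) : ℝ :=
  if k ≤ x.card then (x.card.choose k : ℝ)⁻¹ * ∑ x' ∈ x.powersetCard k, f x'
  else 0

/-- `Edge(f)` for `f` on the Kneser graph `K(n,k)`. -/
noncomputable def edgeF (n k : ℕ) (f : Finset (Fin n) → ℝ) : ℝ :=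
  ∑ x ∈ (Finset.univ : Finset (Fin n)).powersetCard k,
    ∑ y ∈ (Finset.univ : Finset (Fin n)).powersetCard k,
      if Disjoint x y then f x * f y / ((n.choose k : ℝ) * ((n - k).choose k : ℝ))
      else 0

/-- `Edge(g)` for `g` on the cube, w.r.t. the measure `μ_{p,p}`. -/
noncomputable def edgeG (n : ℕ) (p : ℝ) (g : Finset (Fin n) → ℝ) : ℝ :=
  ∑ x : Finset (Fin n), ∑ y : Finset (Fin n),
    if Disjoint x y then
      g x * g y * (p ^ x.card * p ^ y.card * (1 - 2 * p) ^ (n - x.card - y.card))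
    else 0

/- ======================= auxiliary lemmas ======================= -/

lemma exists_perm_image {α : Type*} [Fintype α] [DecidableEq α] {s t : Finset α}
    (h : s.card = t.card) : ∃ σ : Equiv.Perm α, s.image σ = t := by
  classical
  let e : {x // x ∈ s} ≃ {x // x ∈ t} := Finset.equivOfCardEq h
  refine ⟨e.extendSubtype, ?_⟩
  apply Finset.eq_of_subset_of_card_le
  · intro b hb
    obtain ⟨a, ha, rfl⟩ := Finset.mem_image.mp hb
    exact e.extendSubtype_mem a ha
  · rw [Finset.card_image_of_injective _ (Equiv.injective _), h]

lemma exists_perm_image_pair {α : Type*} [Fintype α] [DecidableEq α] {u v u₀ v₀ : Finset α}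
    (hd : Disjoint u v) (hd₀ : Disjoint u₀ v₀) (hu : u.card = u₀.card) (hv : v.card = v₀.card) :
    ∃ σ : Equiv.Perm α, u.image σ = u₀ ∧ v.image σ = v₀ := by
  classical
  obtain ⟨σ₁, hσ₁⟩ := exists_perm_image hu
  set v₁ : Finset α := v.image σ₁ with hv₁def
  have hv₁card : v₁.card = v.card := Finset.card_image_of_injective _ (Equiv.injective _)
  have hdis1 : Disjoint u₀ v₁ := by
    rw [← hσ₁]
    exact (Finset.disjoint_image (Equiv.injective σ₁)).mpr hd
  have hsub1 : ∀ a ∈ v₁, ¬ (a ∈ u₀) := fun a ha hau =>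
    (Finset.disjoint_left.mp hdis1) hau ha
  have hsub0 : ∀ a ∈ v₀, ¬ (a ∈ u₀) := fun a ha hau =>
    (Finset.disjoint_left.mp hd₀) hau ha
  set P : α → Prop := fun a => a ∈ u₀ with hP
  set s' : Finset {a // ¬ P a} := v₁.subtype (fun a => ¬ P a) with hs'
  set t' : Finset {a // ¬ P a} := v₀.subtype (fun a => ¬ P a) with ht'
  have hcard' : s'.card = t'.card := by
    rw [hs', ht', Finset.card_subtype, Finset.card_subtype,
      Finset.filter_true_of_mem hsub1, Finset.filter_true_of_mem hsub0, hv₁card, hv]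
  obtain ⟨τ, hτ⟩ := exists_perm_image hcard'
  set σ₂ : Equiv.Perm α := Equiv.Perm.subtypeCongr (Equiv.refl {a // P a}) τ with hσ₂
  have hfix : ∀ a ∈ u₀, σ₂ a = a := by
    intro a ha
    rw [hσ₂, Equiv.Perm.subtypeCongr.left_apply (h := ha)]; rfl
  have hmove : ∀ a (ha : ¬ P a), σ₂ a = (τ ⟨a, ha⟩ : α) := by
    intro a ha
    rw [hσ₂, Equiv.Perm.subtypeCongr.right_apply (h := ha)]
  refine ⟨σ₁.trans σ₂, ?_, ?_⟩
  · rw [Equiv.coe_trans, ← Finset.image_image, hσ₁]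
    rw [Finset.image_congr (g := id) (fun a ha => hfix a ha), Finset.image_id]
  · rw [Equiv.coe_trans, ← Finset.image_image, ← hv₁def]
    apply Finset.eq_of_subset_of_card_le
    · intro b hb
      obtain ⟨a, ha, rfl⟩ := Finset.mem_image.mp hb
      have hna : ¬ P a := hsub1 a ha
      rw [hmove a hna]
      have : (⟨a, hna⟩ : {a // ¬ P a}) ∈ s' := by
        rw [hs']; simpa [Finset.mem_subtype] using ha
      have := hτ ▸ Finset.mem_image_of_mem τ this
      simpa [ht', Finset.mem_subtype] using this
    · rw [Finset.card_image_of_injective _ (Equiv.injective _), hv₁card, hv]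

/-- The weight kernel. -/
noncomputable def muW (n k : ℕ) (p : ℝ) (x y : Finset (Fin n)) : ℝ :=
  ((x.card.choose k : ℝ))⁻¹ * ((y.card.choose k : ℝ))⁻¹ *
    (p ^ x.card * p ^ y.card * (1 - 2 * p) ^ (n - x.card - y.card))

/-- The coefficient of `f u * f v` when `edgeG` of the up-extension is expanded. -/
noncomputable def Wfun (n k : ℕ) (p : ℝ) (u v : Finset (Fin n)) : ℝ :=
  ∑ x : Finset (Fin n), ∑ y : Finset (Fin n),
    if u ⊆ x ∧ v ⊆ y ∧ Disjoint x y then muW n k p x y else 0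

lemma Wfun_image (n k : ℕ) (p : ℝ) (σ : Equiv.Perm (Fin n)) (u v : Finset (Fin n)) :
    Wfun n k p (u.image σ) (v.image σ) = Wfun n k p u v := by
  unfold Wfun
  refine (Fintype.sum_equiv (Equiv.finsetCongr σ) _ _ fun x =>
    Fintype.sum_equiv (Equiv.finsetCongr σ) _ _ fun y => ?_).symm
  simp only [Equiv.finsetCongr_apply, Finset.map_eq_image, Equiv.coe_toEmbedding]
  unfold muW
  rw [Finset.card_image_of_injective _ (Equiv.injective σ),
    Finset.card_image_of_injective _ (Equiv.injective σ)]
  refine if_congr ?_ rfl rfl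
  rw [Finset.image_subset_image_iff (Equiv.injective σ),
    Finset.image_subset_image_iff (Equiv.injective σ),
    Finset.disjoint_image (Equiv.injective σ)]

lemma Wfun_eq_zero {n k : ℕ} {p : ℝ} {u v : Finset (Fin n)} (h : ¬ Disjoint u v) :
    Wfun n k p u v = 0 := by
  unfold Wfun
  refine Finset.sum_eq_zero fun x _ => Finset.sum_eq_zero fun y _ => ?_
  rw [if_neg]
  rintro ⟨h1, h2, h3⟩
  exact h (h3.mono h1 h2)

lemma upFn_eq {n k : ℕ} (f : Finset (Fin n) → ℝ) (x : Finset (Fin n)) :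
    upFn k f x = (x.card.choose k : ℝ)⁻¹ * ∑ x' ∈ x.powersetCard k, f x' := by
  unfold upFn
  split_ifs with h
  · rfl
  · rw [Finset.powersetCard_eq_empty.mpr (lt_of_not_ge h), Finset.sum_empty, mul_zero]

lemma filter_pck {n : ℕ} (k : ℕ) (x : Finset (Fin n)) :
    ((univ : Finset (Fin n)).powersetCard k).filter (· ⊆ x) = x.powersetCard k := by
  ext u
  simp only [Finset.mem_filter, Finset.mem_powersetCard, Finset.subset_univ, true_and]
  tauto

lemma upFn_eq' {n k : ℕ} (f : Finset (Fin n) → ℝ) (x : Finset (Fin n)) :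
    upFn k f x = ∑ u ∈ (univ : Finset (Fin n)).powersetCard k,
      (if u ⊆ x then (x.card.choose k : ℝ)⁻¹ * f u else 0) := by
  rw [upFn_eq, Finset.mul_sum, ← filter_pck k x, Finset.sum_filter]

/-- binomial identity -/
lemma sum_powerset_pow {α : Type*} [DecidableEq α] (s : Finset α) (a b : ℝ) :
    ∑ t ∈ s.powerset, a ^ t.card * b ^ (s.card - t.card) = (a + b) ^ s.card := by
  rw [← Finset.prod_const, Finset.prod_add]
  refine Finset.sum_congr rfl fun t ht => ?_
  rw [Finset.prod_const, Finset.prod_const, Finset.card_sdiff_of_subset (Finset.mem_powerset.mp ht)]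

lemma filter_disjoint_eq_powerset {n : ℕ} (x : Finset (Fin n)) :
    (univ : Finset (Finset (Fin n))).filter (fun y => Disjoint x y) = xᶜ.powerset := by
  ext y
  simp only [Finset.mem_filter, Finset.mem_univ, true_and, Finset.mem_powerset]
  exact (le_compl_iff_disjoint_left).symm

lemma mu_total (n : ℕ) (p : ℝ) :
    ∑ x : Finset (Fin n), ∑ y : Finset (Fin n),
      (if Disjoint x y then p ^ x.card * p ^ y.card * (1 - 2 * p) ^ (n - x.card - y.card)
       else 0) = 1 := by
  have step1 : ∀ x : Finset (Fin n),
      (∑ y : Finset (Fin n),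
        (if Disjoint x y then p ^ x.card * p ^ y.card * (1 - 2 * p) ^ (n - x.card - y.card)
         else 0)) = p ^ x.card * (1 - p) ^ (n - x.card) := by
    intro x
    rw [← Finset.sum_filter, filter_disjoint_eq_powerset]
    have hc : xᶜ.card = n - x.card := by
      rw [Finset.card_compl, Fintype.card_fin]
    calc ∑ y ∈ xᶜ.powerset, p ^ x.card * p ^ y.card * (1 - 2 * p) ^ (n - x.card - y.card)
        = p ^ x.card * ∑ y ∈ xᶜ.powerset, p ^ y.card * (1 - 2 * p) ^ (xᶜ.card - y.card) := by
          rw [Finset.mul_sum]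
          refine Finset.sum_congr rfl fun y hy => ?_
          rw [hc, mul_assoc]
      _ = p ^ x.card * (p + (1 - 2 * p)) ^ xᶜ.card := by rw [sum_powerset_pow]
      _ = p ^ x.card * (1 - p) ^ (n - x.card) := by rw [hc]; ring_nf
  simp_rw [step1]
  have huniv : (univ : Finset (Finset (Fin n))) = (univ : Finset (Fin n)).powerset := by
    rw [Finset.powerset_univ]
  rw [huniv]
  have hcu : (univ : Finset (Fin n)).card = n := by simp
  calc ∑ x ∈ (univ : Finset (Fin n)).powerset, p ^ x.card * (1 - p) ^ (n - x.card)
      = ∑ x ∈ (univ : Finset (Fin n)).powerset,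
          p ^ x.card * (1 - p) ^ ((univ : Finset (Fin n)).card - x.card) := by
        rw [hcu]
    _ = (p + (1 - p)) ^ (univ : Finset (Fin n)).card := sum_powerset_pow _ _ _
    _ = 1 := by rw [hcu]; ring_nf

lemma swap_sum {n : ℕ} (P Q : Finset (Finset (Fin n)))
    (F : Finset (Fin n) → Finset (Fin n) → Finset (Fin n) → Finset (Fin n) → ℝ) :
    (∑ x : Finset (Fin n), ∑ y : Finset (Fin n), ∑ u ∈ P, ∑ v ∈ Q, F u v x y)
      = ∑ u ∈ P, ∑ v ∈ Q, ∑ x : Finset (Fin n), ∑ y : Finset (Fin n), F u v x y := by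
  calc (∑ x : Finset (Fin n), ∑ y : Finset (Fin n), ∑ u ∈ P, ∑ v ∈ Q, F u v x y)
      = ∑ x : Finset (Fin n), ∑ u ∈ P, ∑ y : Finset (Fin n), ∑ v ∈ Q, F u v x y :=
        Finset.sum_congr rfl fun x _ => Finset.sum_comm
    _ = ∑ u ∈ P, ∑ x : Finset (Fin n), ∑ y : Finset (Fin n), ∑ v ∈ Q, F u v x y :=
        Finset.sum_comm
    _ = ∑ u ∈ P, ∑ x : Finset (Fin n), ∑ v ∈ Q, ∑ y : Finset (Fin n), F u v x y :=
        Finset.sum_congr rfl fun u _ => Finset.sum_congr rfl fun x _ => Finset.sum_comm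
    _ = ∑ u ∈ P, ∑ v ∈ Q, ∑ x : Finset (Fin n), ∑ y : Finset (Fin n), F u v x y :=
        Finset.sum_congr rfl fun u _ => Finset.sum_comm

lemma ite_expand {n k : ℕ} (p : ℝ) (f : Finset (Fin n) → ℝ) (x y : Finset (Fin n)) :
    (if Disjoint x y then upFn k f x * upFn k f y *
        (p ^ x.card * p ^ y.card * (1 - 2 * p) ^ (n - x.card - y.card)) else 0)
    = ∑ u ∈ (univ : Finset (Fin n)).powersetCard k,
        ∑ v ∈ (univ : Finset (Fin n)).powersetCard k,
          (if u ⊆ x ∧ v ⊆ y ∧ Disjoint x y then f u * f v * muW n k p x y else 0) := by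
  by_cases hxy : Disjoint x y
  · rw [if_pos hxy, upFn_eq', upFn_eq', Finset.sum_mul_sum, Finset.sum_mul]
    refine Finset.sum_congr rfl fun u _ => ?_
    rw [Finset.sum_mul]
    refine Finset.sum_congr rfl fun v _ => ?_
    simp only [hxy, and_true]
    unfold muW
    split_ifs <;> first | tauto | ring
  · rw [if_neg hxy]
    symm
    refine Finset.sum_eq_zero fun u _ => Finset.sum_eq_zero fun v _ => ?_
    rw [if_neg]
    rintro ⟨-, -, h⟩
    exact hxy h

lemma edgeG_eq {n k : ℕ} (p : ℝ) (f : Finset (Fin n) → ℝ) :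
    edgeG n p (upFn k f) = ∑ u ∈ (univ : Finset (Fin n)).powersetCard k,
      ∑ v ∈ (univ : Finset (Fin n)).powersetCard k,
        (if Disjoint u v then f u * f v else 0) * Wfun n k p u v := by
  unfold edgeG
  calc (∑ x : Finset (Fin n), ∑ y : Finset (Fin n),
        if Disjoint x y then upFn k f x * upFn k f y *
          (p ^ x.card * p ^ y.card * (1 - 2 * p) ^ (n - x.card - y.card)) else 0)
      = ∑ x : Finset (Fin n), ∑ y : Finset (Fin n),
          ∑ u ∈ (univ : Finset (Fin n)).powersetCard k,
            ∑ v ∈ (univ : Finset (Fin n)).powersetCard k,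
              (if u ⊆ x ∧ v ⊆ y ∧ Disjoint x y then f u * f v * muW n k p x y else 0) :=
        Finset.sum_congr rfl fun x _ => Finset.sum_congr rfl fun y _ => ite_expand p f x y
    _ = ∑ u ∈ (univ : Finset (Fin n)).powersetCard k,
          ∑ v ∈ (univ : Finset (Fin n)).powersetCard k,
            ∑ x : Finset (Fin n), ∑ y : Finset (Fin n),
              (if u ⊆ x ∧ v ⊆ y ∧ Disjoint x y then f u * f v * muW n k p x y else 0) :=
        swap_sum _ _ _
    _ = _ := by
        refine Finset.sum_congr rfl fun u _ => Finset.sum_congr rfl fun v _ => ?_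
        have hW : (∑ x : Finset (Fin n), ∑ y : Finset (Fin n),
            (if u ⊆ x ∧ v ⊆ y ∧ Disjoint x y then f u * f v * muW n k p x y else 0))
            = f u * f v * Wfun n k p u v := by
          unfold Wfun
          rw [Finset.mul_sum]
          refine Finset.sum_congr rfl fun x _ => ?_
          rw [Finset.mul_sum]
          refine Finset.sum_congr rfl fun y _ => ?_
          rw [mul_ite, mul_zero]
        rw [hW]
        by_cases h : Disjoint u v
        · rw [if_pos h]
        · rw [if_neg h, Wfun_eq_zero h, mul_zero, zero_mul]

lemma sum_ite_subset {n : ℕ} (k : ℕ) (x : Finset (Fin n)) (C : ℝ) :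
    ∑ u ∈ (univ : Finset (Fin n)).powersetCard k, (if u ⊆ x then C else 0)
      = (x.card.choose k : ℝ) * C := by
  rw [← Finset.sum_filter, filter_pck, Finset.sum_const, Finset.card_powersetCard,
    nsmul_eq_mul]

lemma nat_mul_inv_le_one (m : ℕ) : 0 ≤ (m : ℝ) * (m : ℝ)⁻¹ ∧ (m : ℝ) * (m : ℝ)⁻¹ ≤ 1 := by
  rcases Nat.eq_zero_or_pos m with h | h
  · subst h; norm_num
  · rw [mul_inv_cancel₀ (by exact_mod_cast h.ne' : (m:ℝ) ≠ 0)]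
    norm_num

lemma Wtotal_le {n k : ℕ} {p : ℝ} (hp0 : 0 < p) (h2p : 0 ≤ 1 - 2 * p) :
    (∑ u ∈ (univ : Finset (Fin n)).powersetCard k,
      ∑ v ∈ (univ : Finset (Fin n)).powersetCard k, Wfun n k p u v) ≤ 1 := by
  have key : (∑ u ∈ (univ : Finset (Fin n)).powersetCard k,
      ∑ v ∈ (univ : Finset (Fin n)).powersetCard k, Wfun n k p u v)
      = ∑ x : Finset (Fin n), ∑ y : Finset (Fin n),
          ∑ u ∈ (univ : Finset (Fin n)).powersetCard k,
            ∑ v ∈ (univ : Finset (Fin n)).powersetCard k,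
              (if u ⊆ x ∧ v ⊆ y ∧ Disjoint x y then muW n k p x y else 0) := by
    rw [swap_sum]; rfl
  rw [key]
  refine le_trans ?_ (le_of_eq (mu_total n p))
  refine Finset.sum_le_sum fun x _ => Finset.sum_le_sum fun y _ => ?_
  by_cases hxy : Disjoint x y
  · have hinner : (∑ u ∈ (univ : Finset (Fin n)).powersetCard k,
        ∑ v ∈ (univ : Finset (Fin n)).powersetCard k,
          (if u ⊆ x ∧ v ⊆ y ∧ Disjoint x y then muW n k p x y else 0))
        = (x.card.choose k : ℝ) * ((y.card.choose k : ℝ) * muW n k p x y) := by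
      rw [← sum_ite_subset k x]
      refine Finset.sum_congr rfl fun u _ => ?_
      by_cases hu : u ⊆ x
      · rw [if_pos hu, ← sum_ite_subset k y]
        refine Finset.sum_congr rfl fun v _ => ?_
        by_cases hv : v ⊆ y
        · rw [if_pos hv, if_pos ⟨hu, hv, hxy⟩]
        · rw [if_neg hv, if_neg (by tauto)]
      · rw [if_neg hu]
        refine Finset.sum_eq_zero fun v _ => ?_
        rw [if_neg (by tauto)]
    rw [hinner, if_pos hxy]
    have hmu0 : 0 ≤ p ^ x.card * p ^ y.card * (1 - 2 * p) ^ (n - x.card - y.card) := by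
      positivity
    obtain ⟨ha0, ha1⟩ := nat_mul_inv_le_one (x.card.choose k)
    obtain ⟨hb0, hb1⟩ := nat_mul_inv_le_one (y.card.choose k)
    have heq : (x.card.choose k : ℝ) * ((y.card.choose k : ℝ) * muW n k p x y)
        = ((x.card.choose k : ℝ) * (x.card.choose k : ℝ)⁻¹)
          * ((y.card.choose k : ℝ) * (y.card.choose k : ℝ)⁻¹)
          * (p ^ x.card * p ^ y.card * (1 - 2 * p) ^ (n - x.card - y.card)) := by
      unfold muW; ring
    rw [heq]
    calc ((x.card.choose k : ℝ) * (x.card.choose k : ℝ)⁻¹)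
          * ((y.card.choose k : ℝ) * (y.card.choose k : ℝ)⁻¹)
          * (p ^ x.card * p ^ y.card * (1 - 2 * p) ^ (n - x.card - y.card))
        ≤ 1 * (p ^ x.card * p ^ y.card * (1 - 2 * p) ^ (n - x.card - y.card)) := by
          refine mul_le_mul_of_nonneg_right ?_ hmu0
          exact mul_le_one₀ ha1 hb0 hb1
      _ = _ := one_mul _
  · rw [if_neg hxy]
    refine le_of_eq (Finset.sum_eq_zero fun u _ => Finset.sum_eq_zero fun v _ => ?_)
    rw [if_neg (by tauto)]

lemma filter_disjoint_pck {n : ℕ} (k : ℕ) (u : Finset (Fin n)) :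
    ((univ : Finset (Fin n)).powersetCard k).filter (fun v => Disjoint u v)
      = uᶜ.powersetCard k := by
  ext v
  simp only [Finset.mem_filter, Finset.mem_powersetCard, Finset.subset_univ, true_and]
  constructor
  · rintro ⟨h1, h2⟩
    exact ⟨le_compl_iff_disjoint_left.mpr h2, h1⟩
  · rintro ⟨h1, h2⟩
    exact ⟨h2, le_compl_iff_disjoint_left.mp h1⟩

lemma count_disjoint {n k : ℕ} (hkn : k ≤ n) (C : ℝ) :
    (∑ u ∈ (univ : Finset (Fin n)).powersetCard k,
      ∑ v ∈ (univ : Finset (Fin n)).powersetCard k, (if Disjoint u v then C else 0))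
      = (n.choose k : ℝ) * (((n - k).choose k : ℝ) * C) := by
  have hstep : ∀ u ∈ (univ : Finset (Fin n)).powersetCard k,
      (∑ v ∈ (univ : Finset (Fin n)).powersetCard k, (if Disjoint u v then C else 0))
        = ((n - k).choose k : ℝ) * C := by
    intro u hu
    have hucard : u.card = k := (Finset.mem_powersetCard_univ.mp hu)
    rw [← Finset.sum_filter, filter_disjoint_pck, Finset.sum_const,
      Finset.card_powersetCard, Finset.card_compl, Fintype.card_fin, hucard, nsmul_eq_mul]
  rw [Finset.sum_congr rfl hstep, Finset.sum_const, Finset.card_powersetCard,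
    Finset.card_univ, Fintype.card_fin, nsmul_eq_mul]

theorem stmt_7 (p : ℝ) (hp0 : 0 < p) (hp : p < 1 / 2)
    (n k : ℕ) (hn : 0 < n) (hk : 0 < k) (hkp : (k : ℝ) = p * n)
    (f : Finset (Fin n) → ℝ)
    (hf : ∀ s : Finset (Fin n), s.card = k → f s ∈ Set.Icc (0:ℝ) 1) :
    edgeG n p (upFn k f) ≤ edgeF n k f := by
  classical
  have h2p : (0:ℝ) ≤ 1 - 2 * p := by linarith
  have h2k : 2 * k ≤ n := by
    have hr : (2 * k : ℝ) ≤ (n : ℝ) := by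
      rw [hkp]
      nlinarith [(Nat.cast_pos (α := ℝ)).mpr hn]
    exact_mod_cast hr
  have hkn : k ≤ n := by omega
  have hkn2 : k ≤ n - k := by omega
  -- reference pair
  obtain ⟨u₀, hu₀sub, hu₀card⟩ := Finset.exists_subset_card_eq
    (show k ≤ (univ : Finset (Fin n)).card by
      rw [Finset.card_univ, Fintype.card_fin]; exact hkn)
  obtain ⟨v₀, hv₀sub, hv₀card⟩ := Finset.exists_subset_card_eq
    (show k ≤ ((univ : Finset (Fin n)) \ u₀).card by
      rw [Finset.card_sdiff_of_subset (Finset.subset_univ _), Finset.card_univ, Fintype.card_fin,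
        hu₀card]
      exact hkn2)
  have hd₀ : Disjoint u₀ v₀ :=
    ((Finset.sdiff_disjoint.mono_left hv₀sub).symm : Disjoint u₀ v₀)
  set c := Wfun n k p u₀ v₀ with hc
  have hconst : ∀ u v : Finset (Fin n), u.card = k → v.card = k → Disjoint u v →
      Wfun n k p u v = c := by
    intro u v hu hv hd
    obtain ⟨σ, h1, h2⟩ := exists_perm_image_pair hd hd₀
      (by rw [hu, hu₀card]) (by rw [hv, hv₀card])
    calc Wfun n k p u v = Wfun n k p (u.image σ) (v.image σ) := (Wfun_image n k p σ u v).symm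
      _ = c := by rw [h1, h2]
  set S := ∑ u ∈ (univ : Finset (Fin n)).powersetCard k,
    ∑ v ∈ (univ : Finset (Fin n)).powersetCard k,
      (if Disjoint u v then f u * f v else 0) with hSdef
  have hS0 : 0 ≤ S := by
    refine Finset.sum_nonneg fun u hu => Finset.sum_nonneg fun v hv => ?_
    split_ifs
    · exact mul_nonneg (hf u (Finset.mem_powersetCard_univ.mp hu)).1
        (hf v (Finset.mem_powersetCard_univ.mp hv)).1
    · exact le_refl 0
  have hG : edgeG n p (upFn k f) = S * c := by
    rw [edgeG_eq, hSdef, Finset.sum_mul]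
    refine Finset.sum_congr rfl fun u hu => ?_
    rw [Finset.sum_mul]
    refine Finset.sum_congr rfl fun v hv => ?_
    by_cases h : Disjoint u v
    · rw [hconst u v (Finset.mem_powersetCard_univ.mp hu)
        (Finset.mem_powersetCard_univ.mp hv) h]
    · rw [if_neg h, zero_mul, zero_mul]
  set N : ℝ := (n.choose k : ℝ) * ((n - k).choose k : ℝ) with hNdef
  have hN0 : (0:ℝ) < N := by
    have h1 : 0 < n.choose k := Nat.choose_pos hkn
    have h2 : 0 < (n - k).choose k := Nat.choose_pos hkn2
    exact mul_pos (by exact_mod_cast h1) (by exact_mod_cast h2)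
  have hF : edgeF n k f = S / N := by
    unfold edgeF
    rw [hSdef, Finset.sum_div]
    refine Finset.sum_congr rfl fun u _ => ?_
    rw [Finset.sum_div]
    refine Finset.sum_congr rfl fun v _ => ?_
    split_ifs
    · rfl
    · exact (zero_div N).symm
  have hT : (∑ u ∈ (univ : Finset (Fin n)).powersetCard k,
      ∑ v ∈ (univ : Finset (Fin n)).powersetCard k, Wfun n k p u v)
      = N * c := by
    have : (∑ u ∈ (univ : Finset (Fin n)).powersetCard k,
        ∑ v ∈ (univ : Finset (Fin n)).powersetCard k, Wfun n k p u v)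
        = ∑ u ∈ (univ : Finset (Fin n)).powersetCard k,
            ∑ v ∈ (univ : Finset (Fin n)).powersetCard k,
              (if Disjoint u v then c else 0) := by
      refine Finset.sum_congr rfl fun u hu => Finset.sum_congr rfl fun v hv => ?_
      by_cases h : Disjoint u v
      · rw [if_pos h, hconst u v (Finset.mem_powersetCard_univ.mp hu)
          (Finset.mem_powersetCard_univ.mp hv) h]
      · rw [if_neg h, Wfun_eq_zero h]
    rw [this, count_disjoint hkn, hNdef, mul_assoc]
  have hT1 : N * c ≤ 1 := hT ▸ Wtotal_le hp0 h2p
  have hc_le : c ≤ 1 / N := by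
    rw [le_div_iff₀ hN0]
    linarith
  rw [hG, hF]
  calc S * c ≤ S * (1 / N) := mul_le_mul_of_nonneg_left hc_le hS0
    _ = S / N := by rw [mul_one_div]
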